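/- With the restricted family on X̃ = {x ∈ X : δ(x) = 0}, the supremum of the restricted log-likelihood over e(B̃) equals the supremum of the log-likelihood over e(B): sup_{p̃ ∈ e(B̃)} l̃_{p̃}(x1,…,xn) = sup_{p ∈ e(B)} l_p(x1,…,xn). -/

import Mathlib

open Real Filter Topology

theorem stmt_8 {X : Type*} [Fintype X] [Nonempty X]
    (μ : X → ℝ) (hμ : ∀ y, 0 < μ y)
    (B : Submodule ℝ (X → ℝ)) (h1 : (fun _ => (1:ℝ)) ∈ B)
    (n : ℕ) (hn : 0 < n) (x : Fin n → X)
    (δ : X → ℝ) (hδB : δ ∈ B) (hδ0 : ∀ y, 0 ≤ δ y) (hδne : δ ≠ 0)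
    (hδx : ∀ i, δ (x i) = 0) :
    sSup {l : ℝ | ∃ φ ∈ B, l = (∑ i, φ (x i)) -
        n * Real.log (∑ y ∈ Finset.univ.filter (fun y => δ y = 0), Real.exp (φ y) * μ y)}
    = sSup {l : ℝ | ∃ φ ∈ B, l = (∑ i, φ (x i)) -
        n * Real.log (∑ y, Real.exp (φ y) * μ y)} := by
  classical
  set F := Finset.univ.filter (fun y : X => δ y = 0) with hF
  have hx0F : x ⟨0, hn⟩ ∈ F := by
    simp [hF, hδx]
  set s1 : (X → ℝ) → ℝ := fun φ =>
    (∑ i, φ (x i)) - n * Real.log (∑ y ∈ F, Real.exp (φ y) * μ y) with hs1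
  set s2 : (X → ℝ) → ℝ := fun φ =>
    (∑ i, φ (x i)) - n * Real.log (∑ y, Real.exp (φ y) * μ y) with hs2
  set S1 : Set ℝ := {l : ℝ | ∃ φ ∈ B, l = s1 φ} with hS1
  set S2 : Set ℝ := {l : ℝ | ∃ φ ∈ B, l = s2 φ} with hS2
  have hL1pos : ∀ φ : X → ℝ, 0 < ∑ y ∈ F, Real.exp (φ y) * μ y := fun φ =>
    Finset.sum_pos (fun y _ => mul_pos (Real.exp_pos _) (hμ y)) ⟨_, hx0F⟩
  have hL2pos : ∀ φ : X → ℝ, 0 < ∑ y : X, Real.exp (φ y) * μ y := fun φ =>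
    Finset.sum_pos (fun y _ => mul_pos (Real.exp_pos _) (hμ y)) Finset.univ_nonempty
  have hle : ∀ φ, s2 φ ≤ s1 φ := by
    intro φ
    have hsum : ∑ y ∈ F, Real.exp (φ y) * μ y ≤ ∑ y : X, Real.exp (φ y) * μ y :=
      Finset.sum_le_sum_of_subset_of_nonneg (Finset.filter_subset _ _)
        (fun y _ _ => le_of_lt (mul_pos (Real.exp_pos _) (hμ y)))
    have hlog := Real.log_le_log (hL1pos φ) hsum
    have hn' : (0:ℝ) ≤ (n:ℝ) := Nat.cast_nonneg n
    simp only [hs1, hs2]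
    nlinarith
  -- tendsto lemma
  have htend : ∀ φ : X → ℝ, Tendsto (fun t : ℝ => s2 (φ - t • δ)) atTop (𝓝 (s1 φ)) := by
    intro φ
    have hLsum : Tendsto (fun t : ℝ => ∑ y : X, Real.exp ((φ - t • δ) y) * μ y) atTop
        (𝓝 (∑ y ∈ F, Real.exp (φ y) * μ y)) := by
      have : (∑ y ∈ F, Real.exp (φ y) * μ y)
          = ∑ y : X, (if δ y = 0 then Real.exp (φ y) * μ y else 0) := by
        rw [hF, Finset.sum_filter]
      rw [this]
      apply tendsto_finset_sum
      intro y _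
      by_cases hy : δ y = 0
      · simp only [hy, if_pos]
        have : (fun t : ℝ => Real.exp ((φ - t • δ) y) * μ y)
            = fun _ => Real.exp (φ y) * μ y := by
          funext t; simp [hy]
        rw [this]
        exact tendsto_const_nhds
      · simp only [hy, if_neg, not_false_iff]
        have hpos : 0 < δ y := lt_of_le_of_ne (hδ0 y) (Ne.symm hy)
        have h1 : Tendsto (fun t : ℝ => φ y - t * δ y) atTop atBot := by
          have h0 : Tendsto (fun t : ℝ => t * δ y) atTop atTop :=
            tendsto_id.atTop_mul_const hpos
          simpa [sub_eq_add_neg] using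
            tendsto_atBot_add_const_left atTop (φ y) (tendsto_neg_atTop_atBot.comp h0)
        have h2 : Tendsto (fun t : ℝ => Real.exp ((φ - t • δ) y)) atTop (𝓝 0) := by
          have := Real.tendsto_exp_atBot.comp h1
          refine this.congr (fun t => ?_)
          simp [Pi.sub_apply]
        simpa using h2.mul_const (μ y)
    have hlog : Tendsto (fun t : ℝ => Real.log (∑ y : X, Real.exp ((φ - t • δ) y) * μ y))
        atTop (𝓝 (Real.log (∑ y ∈ F, Real.exp (φ y) * μ y))) :=
      (Real.continuousAt_log (ne_of_gt (hL1pos φ))).tendsto.comp hLsum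
    have hT : ∀ t : ℝ, (∑ i, (φ - t • δ) (x i)) = ∑ i, φ (x i) := by
      intro t
      apply Finset.sum_congr rfl
      intro i _
      simp [hδx i]
    have := (tendsto_const_nhds (x := ∑ i, φ (x i)) (f := atTop (α := ℝ))).sub
      (hlog.const_mul (n : ℝ))
    refine this.congr (fun t => ?_)
    simp [hs2, hδx]
  have hS1ne : S1.Nonempty := ⟨s1 0, 0, B.zero_mem, rfl⟩
  have hS2ne : S2.Nonempty := ⟨s2 0, 0, B.zero_mem, rfl⟩
  by_cases hbdd : BddAbove S2
  · -- every element of S1 ≤ sSup S2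
    have hS1le : ∀ l ∈ S1, l ≤ sSup S2 := by
      rintro l ⟨φ, hφ, rfl⟩
      refine le_of_tendsto (htend φ) (Filter.Eventually.of_forall fun t => ?_)
      exact le_csSup hbdd ⟨φ - t • δ, B.sub_mem hφ (B.smul_mem t hδB), rfl⟩
    have hS1bdd : BddAbove S1 := ⟨sSup S2, fun l hl => hS1le l hl⟩
    apply le_antisymm
    · exact csSup_le hS1ne hS1le
    · apply csSup_le hS2ne
      rintro l ⟨φ, hφ, rfl⟩
      exact le_trans (hle φ) (le_csSup hS1bdd ⟨φ, hφ, rfl⟩)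
  · have hS1bdd : ¬ BddAbove S1 := by
      intro ⟨M, hM⟩
      apply hbdd
      refine ⟨M, ?_⟩
      rintro l ⟨φ, hφ, rfl⟩
      exact le_trans (hle φ) (hM ⟨φ, hφ, rfl⟩)
    rw [Real.sSup_of_not_bddAbove hS1bdd, Real.sSup_of_not_bddAbove hbdd]
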